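/- Fix input rates r and costs as in the model. (i) The set of flow-feasible vectors (f⁻, f⁺, g) is a convex set, and the flow-domain total cost T_f(f⁻, f⁺, g) = Σ_{(i,j)∈E} D_{ij}(F_{ij}) + Σ_{i∈V} C_i(G_i) — where F_{ij} = Σ_{(d,m)∈T}(L⁻_m f⁻_{ij}(d,m) + L⁺_m f⁺_{ij}(d,m)) and G_i = Σ_{m∈M} w_{im} Σ_{d:(d,m)∈T} g_i(d,m) are linear in (f⁻, f⁺, g) — is a convex function on this set. (ii) Consequently, if φ₁ and φ₂ are feasible forwarding strategies whose traffic vectors are all strictly positive, with induced flow vectors f₁ = f(φ₁) and f₂ = f(φ₂), then for every s ∈ [0,1] the interpolated flow (1−s)f₁ + s f₂ is flow-feasible with strictly positive traffic, there is a unique feasible strategy γ(s) inducing it, and the function s ↦ T(γ(s)) = T_f((1−s)f₁ + s f₂) is convex on [0,1]; that is, the total cost T(φ) is geodesically convex along the geodesic γ_{φ₁φ₂}(s) = φ((1−s)f(φ₁) + s f(φ₂)). -/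

import Mathlib

open Finset

/-- Neighbors of node `i` in the link set `E`. -/
def Nbr {V : Type*} [Fintype V] [DecidableEq V] (E : Finset (V × V)) (i : V) : Finset V :=
  univ.filter (fun j => (i, j) ∈ E)

/-- A flow-feasible vector `x = (f⁻, f⁺, g)`: nonnegative flows, supported on `E`, satisfying
the data and result flow-conservation constraints for every task. -/
def FlowFeasible {V M : Type*} [Fintype V] [DecidableEq V] [Fintype M] [DecidableEq M]
    (E : Finset (V × V)) (Tsk : Finset (V × M)) (r : V → V × M → ℝ)
    (x : (V → V → V × M → ℝ) × (V → V → V × M → ℝ) × (V → V × M → ℝ)) : Prop :=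
  (∀ i j dm, 0 ≤ x.1 i j dm) ∧ (∀ i j dm, 0 ≤ x.2.1 i j dm) ∧ (∀ i dm, 0 ≤ x.2.2 i dm) ∧
  (∀ i j dm, (i, j) ∉ E → x.1 i j dm = 0) ∧ (∀ i j dm, (i, j) ∉ E → x.2.1 i j dm = 0) ∧
  (∀ dm ∈ Tsk, ∀ i : V, (∑ j ∈ Nbr E i, x.1 i j dm) + x.2.2 i dm
      = (∑ j ∈ Nbr E i, x.1 j i dm) + r i dm) ∧
  (∀ dm ∈ Tsk, ∀ i : V, i ≠ dm.1 → (∑ j ∈ Nbr E i, x.2.1 i j dm)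
      = (∑ j ∈ Nbr E i, x.2.1 j i dm) + x.2.2 i dm) ∧
  (∀ dm ∈ Tsk, ∀ j, x.2.1 dm.1 j dm = 0)

/-- The flow-domain total cost `T_f(f⁻, f⁺, g)`. -/
noncomputable def flowCost {V M : Type*} [Fintype V] [DecidableEq V] [Fintype M] [DecidableEq M]
    (E : Finset (V × V)) (Tsk : Finset (V × M))
    (Lm Lp : M → ℝ) (w : V → M → ℝ) (D : V → V → ℝ → ℝ) (C : V → ℝ → ℝ)
    (x : (V → V → V × M → ℝ) × (V → V → V × M → ℝ) × (V → V × M → ℝ)) : ℝ :=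
  (∑ e ∈ E, D e.1 e.2 (∑ dm ∈ Tsk, (Lm dm.2 * x.1 e.1 e.2 dm + Lp dm.2 * x.2.1 e.1 e.2 dm)))
    + ∑ i, C i (∑ dm ∈ Tsk, w i dm.2 * x.2.2 i dm)

/-- A feasible forwarding strategy `(φ⁻, φ⁺)`. -/
def StratFeasible {V M : Type*} [Fintype V] [DecidableEq V] [Fintype M] [DecidableEq M]
    (E : Finset (V × V)) (Tsk : Finset (V × M))
    (φm : V → Option V → V × M → ℝ) (φp : V → V → V × M → ℝ) : Prop :=
  (∀ i j dm, 0 ≤ φm i j dm) ∧ (∀ i j dm, φm i j dm ≤ 1) ∧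
  (∀ i j dm, 0 ≤ φp i j dm) ∧ (∀ i j dm, φp i j dm ≤ 1) ∧
  (∀ i j dm, (i, j) ∉ E → φm i (some j) dm = 0) ∧
  (∀ i j dm, (i, j) ∉ E → φp i j dm = 0) ∧
  (∀ dm ∈ Tsk, ∀ i : V, φm i none dm + ∑ j, φm i (some j) dm = 1) ∧
  (∀ dm ∈ Tsk, ∀ i : V, i ≠ dm.1 → ∑ j, φp i j dm = 1) ∧
  (∀ dm ∈ Tsk, ∀ j, φp dm.1 j dm = 0)

/-- A strategy `(φ⁻, φ⁺)` induces the flow vector `x` when the forwarding fractions applied to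
the traffic recovered from `x` (namely `t⁻_i = Σ_j f⁻_{ji} + r_i` and
`t⁺_i = Σ_j f⁺_{ji} + g_i`) reproduce `x`. -/
def Induces {V M : Type*} [Fintype V] [DecidableEq V] [Fintype M] [DecidableEq M]
    (Tsk : Finset (V × M)) (r : V → V × M → ℝ)
    (φm : V → Option V → V × M → ℝ) (φp : V → V → V × M → ℝ)
    (x : (V → V → V × M → ℝ) × (V → V → V × M → ℝ) × (V → V × M → ℝ)) : Prop :=
  ∀ dm ∈ Tsk, ∀ i : V,
    (∀ j, x.1 i j dm = ((∑ k, x.1 k i dm) + r i dm) * φm i (some j) dm) ∧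
    (x.2.2 i dm = ((∑ k, x.1 k i dm) + r i dm) * φm i none dm) ∧
    (∀ j, x.2.1 i j dm = ((∑ k, x.2.1 k i dm) + x.2.2 i dm) * φp i j dm)

section Helpers

variable {V M : Type*} [Fintype V] [DecidableEq V] [Fintype M] [DecidableEq M]

lemma sum_nbr_eq (E : Finset (V × V)) (i : V) (h : V → ℝ)
    (h0 : ∀ j, (i, j) ∉ E → h j = 0) : ∑ j ∈ Nbr E i, h j = ∑ j, h j := by
  refine Finset.sum_subset (Finset.filter_subset _ _) ?_
  intro j _ hj
  exact h0 j (by simpa [Nbr] using hj)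

lemma induced_feasible (E : Finset (V × V))
    (hEsymm : ∀ i j : V, (i, j) ∈ E → (j, i) ∈ E)
    (Tsk : Finset (V × M)) (r : V → V × M → ℝ)
    (φm : V → Option V → V × M → ℝ) (φp : V → V → V × M → ℝ)
    (tm tp : V → V × M → ℝ)
    (hstrat : StratFeasible E Tsk φm φp)
    (htm : ∀ i dm, 0 < tm i dm) (htp : ∀ i dm, 0 < tp i dm)
    (em : ∀ dm ∈ Tsk, ∀ i : V, tm i dm = r i dm + ∑ j, tm j dm * φm j (some i) dm)
    (ep : ∀ dm ∈ Tsk, ∀ i : V,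
      tp i dm = tm i dm * φm i none dm + ∑ j, tp j dm * φp j i dm) :
    FlowFeasible E Tsk r
      (fun i j dm => tm i dm * φm i (some j) dm,
       fun i j dm => tp i dm * φp i j dm,
       fun i dm => tm i dm * φm i none dm) := by
  obtain ⟨s1, s2, s3, s4, s5, s6, s7, s8, s9⟩ := hstrat
  refine ⟨?_, ?_, ?_, ?_, ?_, ?_, ?_, ?_⟩
  · exact fun i j dm => mul_nonneg (htm i dm).le (s1 i (some j) dm)
  · exact fun i j dm => mul_nonneg (htp i dm).le (s3 i j dm)
  · exact fun i dm => mul_nonneg (htm i dm).le (s1 i none dm)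
  · intro i j dm hij; dsimp only; rw [s5 i j dm hij, mul_zero]
  · intro i j dm hij; dsimp only; rw [s6 i j dm hij, mul_zero]
  · intro dm hdm i
    dsimp only
    have hL : ∑ j ∈ Nbr E i, tm i dm * φm i (some j) dm
        = ∑ j, tm i dm * φm i (some j) dm :=
      sum_nbr_eq E i _ (fun j hj => by rw [s5 i j dm hj, mul_zero])
    have hR : ∑ j ∈ Nbr E i, tm j dm * φm j (some i) dm
        = ∑ j, tm j dm * φm j (some i) dm :=
      sum_nbr_eq E i _ (fun j hj => by
        rw [s5 j i dm (fun hmem => hj (hEsymm j i hmem)), mul_zero])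
    rw [hL, hR, ← Finset.mul_sum]
    have h7 := s7 dm hdm i
    have hm := em dm hdm i
    linear_combination tm i dm * h7 + hm
  · intro dm hdm i hid
    dsimp only
    have hL : ∑ j ∈ Nbr E i, tp i dm * φp i j dm = ∑ j, tp i dm * φp i j dm :=
      sum_nbr_eq E i _ (fun j hj => by rw [s6 i j dm hj, mul_zero])
    have hR : ∑ j ∈ Nbr E i, tp j dm * φp j i dm = ∑ j, tp j dm * φp j i dm :=
      sum_nbr_eq E i _ (fun j hj => by
        rw [s6 j i dm (fun hmem => hj (hEsymm j i hmem)), mul_zero])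
    rw [hL, hR, ← Finset.mul_sum]
    have h8 := s8 dm hdm i hid
    have hp := ep dm hdm i
    linear_combination tp i dm * h8 + hp
  · intro dm hdm j; dsimp only; rw [s9 dm hdm j, mul_zero]

lemma feasible_combo (E : Finset (V × V)) (Tsk : Finset (V × M)) (r : V → V × M → ℝ)
    (x y : (V → V → V × M → ℝ) × (V → V → V × M → ℝ) × (V → V × M → ℝ))
    (a b : ℝ) (ha : 0 ≤ a) (hb : 0 ≤ b) (hab : a + b = 1)
    (hx : FlowFeasible E Tsk r x) (hy : FlowFeasible E Tsk r y) :
    FlowFeasible E Tsk r (a • x + b • y) := by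
  obtain ⟨x1, x2, x3, x4, x5, x6, x7, x8⟩ := hx
  obtain ⟨y1, y2, y3, y4, y5, y6, y7, y8⟩ := hy
  have e1 : ∀ i j dm, (a • x + b • y).1 i j dm = a * x.1 i j dm + b * y.1 i j dm :=
    fun _ _ _ => rfl
  have e2 : ∀ i j dm, (a • x + b • y).2.1 i j dm = a * x.2.1 i j dm + b * y.2.1 i j dm :=
    fun _ _ _ => rfl
  have e3 : ∀ i dm, (a • x + b • y).2.2 i dm = a * x.2.2 i dm + b * y.2.2 i dm :=
    fun _ _ => rfl
  refine ⟨?_, ?_, ?_, ?_, ?_, ?_, ?_, ?_⟩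
  · intro i j dm; rw [e1]
    exact add_nonneg (mul_nonneg ha (x1 i j dm)) (mul_nonneg hb (y1 i j dm))
  · intro i j dm; rw [e2]
    exact add_nonneg (mul_nonneg ha (x2 i j dm)) (mul_nonneg hb (y2 i j dm))
  · intro i dm; rw [e3]
    exact add_nonneg (mul_nonneg ha (x3 i dm)) (mul_nonneg hb (y3 i dm))
  · intro i j dm hij; rw [e1, x4 i j dm hij, y4 i j dm hij]; ring
  · intro i j dm hij; rw [e2, x5 i j dm hij, y5 i j dm hij]; ring
  · intro dm hdm i
    simp only [e1, e3, Finset.sum_add_distrib, ← Finset.mul_sum]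
    linear_combination a * (x6 dm hdm i) + b * (y6 dm hdm i) + r i dm * hab
  · intro dm hdm i hid
    simp only [e2, e3, Finset.sum_add_distrib, ← Finset.mul_sum]
    linear_combination a * (x7 dm hdm i hid) + b * (y7 dm hdm i hid)
  · intro dm hdm j; rw [e2, x8 dm hdm j, y8 dm hdm j]; ring

lemma flowCost_convexOn (E : Finset (V × V)) (Tsk : Finset (V × M))
    (Lm Lp : M → ℝ) (w : V → M → ℝ) (D : V → V → ℝ → ℝ) (C : V → ℝ → ℝ)
    (hDconv : ∀ i j, ConvexOn ℝ Set.univ (D i j))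
    (hCconv : ∀ i, ConvexOn ℝ Set.univ (C i)) :
    ConvexOn ℝ Set.univ (flowCost E Tsk Lm Lp w D C) := by
  refine ⟨convex_univ, fun x _ y _ a b ha hb hab => ?_⟩
  have harg : ∀ e : V × V,
      (∑ dm ∈ Tsk, (Lm dm.2 * (a • x + b • y).1 e.1 e.2 dm
          + Lp dm.2 * (a • x + b • y).2.1 e.1 e.2 dm))
      = a * (∑ dm ∈ Tsk, (Lm dm.2 * x.1 e.1 e.2 dm + Lp dm.2 * x.2.1 e.1 e.2 dm))
        + b * (∑ dm ∈ Tsk, (Lm dm.2 * y.1 e.1 e.2 dm + Lp dm.2 * y.2.1 e.1 e.2 dm)) := by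
    intro e
    rw [Finset.mul_sum, Finset.mul_sum, ← Finset.sum_add_distrib]
    refine Finset.sum_congr rfl fun dm _ => ?_
    show Lm dm.2 * (a * x.1 e.1 e.2 dm + b * y.1 e.1 e.2 dm)
        + Lp dm.2 * (a * x.2.1 e.1 e.2 dm + b * y.2.1 e.1 e.2 dm) = _
    ring
  have harg2 : ∀ i : V,
      (∑ dm ∈ Tsk, w i dm.2 * (a • x + b • y).2.2 i dm)
      = a * (∑ dm ∈ Tsk, w i dm.2 * x.2.2 i dm)
        + b * (∑ dm ∈ Tsk, w i dm.2 * y.2.2 i dm) := by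
    intro i
    rw [Finset.mul_sum, Finset.mul_sum, ← Finset.sum_add_distrib]
    refine Finset.sum_congr rfl fun dm _ => ?_
    show w i dm.2 * (a * x.2.2 i dm + b * y.2.2 i dm) = _
    ring
  have key1 : ∑ e ∈ E, D e.1 e.2 (∑ dm ∈ Tsk, (Lm dm.2 * (a • x + b • y).1 e.1 e.2 dm
          + Lp dm.2 * (a • x + b • y).2.1 e.1 e.2 dm))
      ≤ a * (∑ e ∈ E, D e.1 e.2
            (∑ dm ∈ Tsk, (Lm dm.2 * x.1 e.1 e.2 dm + Lp dm.2 * x.2.1 e.1 e.2 dm)))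
        + b * (∑ e ∈ E, D e.1 e.2
            (∑ dm ∈ Tsk, (Lm dm.2 * y.1 e.1 e.2 dm + Lp dm.2 * y.2.1 e.1 e.2 dm))) := by
    rw [Finset.mul_sum, Finset.mul_sum, ← Finset.sum_add_distrib]
    refine Finset.sum_le_sum fun e _ => ?_
    rw [harg e]
    simpa [smul_eq_mul] using
      (hDconv e.1 e.2).2 (Set.mem_univ _) (Set.mem_univ _) ha hb hab
  have key2 : ∑ i, C i (∑ dm ∈ Tsk, w i dm.2 * (a • x + b • y).2.2 i dm)
      ≤ a * (∑ i, C i (∑ dm ∈ Tsk, w i dm.2 * x.2.2 i dm))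
        + b * (∑ i, C i (∑ dm ∈ Tsk, w i dm.2 * y.2.2 i dm)) := by
    rw [Finset.mul_sum, Finset.mul_sum, ← Finset.sum_add_distrib]
    refine Finset.sum_le_sum fun i _ => ?_
    rw [harg2 i]
    simpa [smul_eq_mul] using
      (hCconv i).2 (Set.mem_univ _) (Set.mem_univ _) ha hb hab
  simp only [flowCost, smul_eq_mul]
  refine le_trans (add_le_add key1 key2) (le_of_eq ?_)
  ring

end Helpers

/-- (i) The flow-feasible set is convex and the flow-domain total cost is convex on it.
(ii) For any two feasible strategies `φ₁, φ₂` with strictly positive traffic, every convex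
combination of their induced flows is flow-feasible with strictly positive traffic, is induced
by a unique feasible strategy `γ(s)`, and `s ↦ T(γ(s)) = T_f((1−s)·f(φ₁) + s·f(φ₂))` is convex
on `[0,1]`: the total cost is geodesically convex along
`γ_{φ₁φ₂}(s) = φ((1−s)·f(φ₁) + s·f(φ₂))`. -/
theorem stmt_8
    {V M : Type*} [Fintype V] [DecidableEq V] [Fintype M] [DecidableEq M]
    (E : Finset (V × V))
    (hEsymm : ∀ i j : V, (i, j) ∈ E → (j, i) ∈ E)
    (hEirrefl : ∀ i : V, (i, i) ∉ E)
    (Tsk : Finset (V × M))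
    (Lm Lp : M → ℝ) (hLm : ∀ m, 0 < Lm m) (hLp : ∀ m, 0 < Lp m)
    (w : V → M → ℝ) (hw : ∀ i m, 0 < w i m)
    (r : V → V × M → ℝ) (hr : ∀ i dm, 0 ≤ r i dm)
    (D : V → V → ℝ → ℝ) (C : V → ℝ → ℝ)
    (hDmono : ∀ i j, Monotone (D i j))
    (hDconv : ∀ i j, ConvexOn ℝ Set.univ (D i j))
    (hDdiff : ∀ i j, ContDiff ℝ 1 (D i j))
    (hCmono : ∀ i, Monotone (C i))
    (hCconv : ∀ i, ConvexOn ℝ Set.univ (C i))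
    (hCdiff : ∀ i, ContDiff ℝ 1 (C i)) :
    -- (i) convexity in the flow domain
    (Convex ℝ {x : (V → V → V × M → ℝ) × (V → V → V × M → ℝ) × (V → V × M → ℝ) |
        FlowFeasible E Tsk r x} ∧
      ConvexOn ℝ {x : (V → V → V × M → ℝ) × (V → V → V × M → ℝ) × (V → V × M → ℝ) |
        FlowFeasible E Tsk r x} (flowCost E Tsk Lm Lp w D C)) ∧
    -- (ii) geodesic convexity of the total cost along flow-interpolation geodesics
    (∀ (φm₁ φp₁ : _) (φm₂ : V → Option V → V × M → ℝ) (φp₂ : V → V → V × M → ℝ)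
        (tm₁ tp₁ tm₂ tp₂ : V → V × M → ℝ),
      StratFeasible E Tsk φm₁ φp₁ → StratFeasible E Tsk φm₂ φp₂ →
      (∀ i dm, 0 < tm₁ i dm) → (∀ i dm, 0 < tp₁ i dm) →
      (∀ i dm, 0 < tm₂ i dm) → (∀ i dm, 0 < tp₂ i dm) →
      (∀ dm ∈ Tsk, ∀ i : V, tm₁ i dm = r i dm + ∑ j, tm₁ j dm * φm₁ j (some i) dm) →
      (∀ dm ∈ Tsk, ∀ i : V,
        tp₁ i dm = tm₁ i dm * φm₁ i none dm + ∑ j, tp₁ j dm * φp₁ j i dm) →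
      (∀ dm ∈ Tsk, ∀ i : V, tm₂ i dm = r i dm + ∑ j, tm₂ j dm * φm₂ j (some i) dm) →
      (∀ dm ∈ Tsk, ∀ i : V,
        tp₂ i dm = tm₂ i dm * φm₂ i none dm + ∑ j, tp₂ j dm * φp₂ j i dm) →
      ∀ xs : ℝ → (V → V → V × M → ℝ) × (V → V → V × M → ℝ) × (V → V × M → ℝ),
      (∀ s : ℝ, xs s =
        (fun i j dm => (1 - s) * (tm₁ i dm * φm₁ i (some j) dm)
            + s * (tm₂ i dm * φm₂ i (some j) dm),
         fun i j dm => (1 - s) * (tp₁ i dm * φp₁ i j dm) + s * (tp₂ i dm * φp₂ i j dm),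
         fun i dm => (1 - s) * (tm₁ i dm * φm₁ i none dm)
            + s * (tm₂ i dm * φm₂ i none dm))) →
      (∀ s ∈ Set.Icc (0 : ℝ) 1,
        -- the interpolated flow is flow-feasible
        FlowFeasible E Tsk r (xs s) ∧
        -- with strictly positive traffic
        (∀ dm ∈ Tsk, ∀ i : V, 0 < (∑ j, (xs s).1 j i dm) + r i dm ∧
          0 < (∑ j, (xs s).2.1 j i dm) + (xs s).2.2 i dm) ∧
        -- induced by a unique feasible strategy γ(s)
        (∃ φm φp, (StratFeasible E Tsk φm φp ∧ Induces Tsk r φm φp (xs s)) ∧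
          ∀ φm' φp', StratFeasible E Tsk φm' φp' → Induces Tsk r φm' φp' (xs s) →
            ∀ dm ∈ Tsk, (∀ i j, φm' i j dm = φm i j dm) ∧ ∀ i j, φp' i j dm = φp i j dm)) ∧
      -- and s ↦ T(γ(s)) is convex on [0,1]
      ConvexOn ℝ (Set.Icc (0 : ℝ) 1) (fun s => flowCost E Tsk Lm Lp w D C (xs s))) := by
  have hSconv : Convex ℝ {x : (V → V → V × M → ℝ) × (V → V → V × M → ℝ) × (V → V × M → ℝ) |
      FlowFeasible E Tsk r x} := by
    intro x hx y hy a b ha hb hab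
    exact feasible_combo E Tsk r x y a b ha hb hab hx hy
  have hcost := flowCost_convexOn E Tsk Lm Lp w D C hDconv hCconv
  refine ⟨⟨hSconv, hcost.subset (Set.subset_univ _) hSconv⟩, ?_⟩
  intro φm₁ φp₁ φm₂ φp₂ tm₁ tp₁ tm₂ tp₂ h1 h2 htm1 htp1 htm2 htp2 e1m e1p e2m e2p xs hxs
  -- feasibility of the two endpoint flows
  have hf₁ := induced_feasible E hEsymm Tsk r φm₁ φp₁ tm₁ tp₁ h1 htm1 htp1 e1m e1p
  have hf₂ := induced_feasible E hEsymm Tsk r φm₂ φp₂ tm₂ tp₂ h2 htm2 htp2 e2m e2p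
  obtain ⟨h1a, h1b, h1c, h1d, h1e, h1f, h1g, h1h, h1i⟩ := h1
  obtain ⟨h2a, h2b, h2c, h2d, h2e, h2f, h2g, h2h, h2i⟩ := h2
  constructor
  · -- the per-s statements
    intro s hs
    have hxss : xs s
        = (1 - s) • (fun i j dm => tm₁ i dm * φm₁ i (some j) dm,
            fun i j dm => tp₁ i dm * φp₁ i j dm,
            fun i dm => tm₁ i dm * φm₁ i none dm)
          + s • (fun i j dm => tm₂ i dm * φm₂ i (some j) dm,
            fun i j dm => tp₂ i dm * φp₂ i j dm,
            fun i dm => tm₂ i dm * φm₂ i none dm) := by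
      rw [hxs]; rfl
    have hfeas : FlowFeasible E Tsk r (xs s) := by
      rw [hxss]
      exact feasible_combo E Tsk r _ _ _ _ (by linarith [hs.2]) hs.1 (by ring) hf₁ hf₂
    -- incoming traffic formulas
    have hTm : ∀ dm ∈ Tsk, ∀ i : V,
        (∑ k, (xs s).1 k i dm) + r i dm = (1 - s) * tm₁ i dm + s * tm₂ i dm := by
      intro dm hdm i
      simp only [hxs, Finset.sum_add_distrib, ← Finset.mul_sum]
      linear_combination (s - 1) * (e1m dm hdm i) - s * (e2m dm hdm i)
    have hTp : ∀ dm ∈ Tsk, ∀ i : V,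
        (∑ k, (xs s).2.1 k i dm) + (xs s).2.2 i dm
          = (1 - s) * tp₁ i dm + s * tp₂ i dm := by
      intro dm hdm i
      simp only [hxs, Finset.sum_add_distrib, ← Finset.mul_sum]
      linear_combination (s - 1) * (e1p dm hdm i) - s * (e2p dm hdm i)
    have hcomb : ∀ p q : ℝ, 0 < p → 0 < q → 0 < (1 - s) * p + s * q := by
      intro p q hp hq
      rcases eq_or_lt_of_le hs.1 with h | h
      · rw [← h]; simpa using hp
      · have h1' : 0 < s * q := mul_pos h hq
        have h2' : 0 ≤ (1 - s) * p := mul_nonneg (by linarith [hs.2]) hp.le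
        linarith
    have hTmpos : ∀ dm ∈ Tsk, ∀ i : V, 0 < (∑ k, (xs s).1 k i dm) + r i dm := by
      intro dm hdm i; rw [hTm dm hdm i]; exact hcomb _ _ (htm1 i dm) (htm2 i dm)
    have hTppos : ∀ dm ∈ Tsk, ∀ i : V,
        0 < (∑ k, (xs s).2.1 k i dm) + (xs s).2.2 i dm := by
      intro dm hdm i; rw [hTp dm hdm i]; exact hcomb _ _ (htp1 i dm) (htp2 i dm)
    refine ⟨hfeas, fun dm hdm i => ⟨hTmpos dm hdm i, hTppos dm hdm i⟩, ?_⟩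
    -- construct the unique inducing strategy
    obtain ⟨f1, f2, f3, f4, f5, f6, f7, f8⟩ := hfeas
    -- outgoing sum identities
    have hOutm : ∀ dm ∈ Tsk, ∀ i : V,
        (∑ j, (xs s).1 i j dm) + (xs s).2.2 i dm
          = (∑ k, (xs s).1 k i dm) + r i dm := by
      intro dm hdm i
      rw [hTm dm hdm i]
      simp only [hxs, Finset.sum_add_distrib, ← Finset.mul_sum]
      linear_combination ((1 - s) * tm₁ i dm) * (h1g dm hdm i)
        + (s * tm₂ i dm) * (h2g dm hdm i)
    have hOutp : ∀ dm ∈ Tsk, ∀ i : V, i ≠ dm.1 →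
        (∑ j, (xs s).2.1 i j dm)
          = (∑ k, (xs s).2.1 k i dm) + (xs s).2.2 i dm := by
      intro dm hdm i hid
      rw [hTp dm hdm i]
      simp only [hxs, Finset.sum_add_distrib, ← Finset.mul_sum]
      linear_combination ((1 - s) * tp₁ i dm) * (h1h dm hdm i hid)
        + (s * tp₂ i dm) * (h2h dm hdm i hid)
    -- entrywise upper bounds by the traffic
    have hBm : ∀ dm ∈ Tsk, ∀ i : V, ∀ oj : Option V,
        (match oj with
          | some j => (xs s).1 i j dm
          | none => (xs s).2.2 i dm)
          ≤ (∑ k, (xs s).1 k i dm) + r i dm := by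
      intro dm hdm i oj
      rw [hTm dm hdm i]
      have hs1 : (0:ℝ) ≤ 1 - s := by linarith [hs.2]
      cases oj with
      | some j =>
        have b1 : tm₁ i dm * φm₁ i (some j) dm ≤ tm₁ i dm :=
          mul_le_of_le_one_right (htm1 i dm).le (h1b i (some j) dm)
        have b2 : tm₂ i dm * φm₂ i (some j) dm ≤ tm₂ i dm :=
          mul_le_of_le_one_right (htm2 i dm).le (h2b i (some j) dm)
        simp only [hxs]
        have c1 := mul_le_mul_of_nonneg_left b1 hs1
        have c2 := mul_le_mul_of_nonneg_left b2 hs.1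
        linarith
      | none =>
        have b1 : tm₁ i dm * φm₁ i none dm ≤ tm₁ i dm :=
          mul_le_of_le_one_right (htm1 i dm).le (h1b i none dm)
        have b2 : tm₂ i dm * φm₂ i none dm ≤ tm₂ i dm :=
          mul_le_of_le_one_right (htm2 i dm).le (h2b i none dm)
        simp only [hxs]
        have c1 := mul_le_mul_of_nonneg_left b1 hs1
        have c2 := mul_le_mul_of_nonneg_left b2 hs.1
        linarith
    have hBp : ∀ dm ∈ Tsk, ∀ i j : V,
        (xs s).2.1 i j dm ≤ (∑ k, (xs s).2.1 k i dm) + (xs s).2.2 i dm := by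
      intro dm hdm i j
      rw [hTp dm hdm i]
      have hs1 : (0:ℝ) ≤ 1 - s := by linarith [hs.2]
      have b1 : tp₁ i dm * φp₁ i j dm ≤ tp₁ i dm :=
        mul_le_of_le_one_right (htp1 i dm).le (h1d i j dm)
      have b2 : tp₂ i dm * φp₂ i j dm ≤ tp₂ i dm :=
        mul_le_of_le_one_right (htp2 i dm).le (h2d i j dm)
      simp only [hxs]
      have c1 := mul_le_mul_of_nonneg_left b1 hs1
      have c2 := mul_le_mul_of_nonneg_left b2 hs.1
      linarith
    refine ⟨fun i oj dm => if dm ∈ Tsk then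
        (match oj with
          | some j => (xs s).1 i j dm
          | none => (xs s).2.2 i dm) / ((∑ k, (xs s).1 k i dm) + r i dm) else 0,
      fun i j dm => if dm ∈ Tsk then
        (xs s).2.1 i j dm / ((∑ k, (xs s).2.1 k i dm) + (xs s).2.2 i dm) else 0,
      ⟨⟨?_, ?_, ?_, ?_, ?_, ?_, ?_, ?_, ?_⟩, ?_⟩, ?_⟩
    · -- 0 ≤ φm
      intro i oj dm
      dsimp only
      by_cases hdm : dm ∈ Tsk
      · rw [if_pos hdm]
        refine div_nonneg ?_ (hTmpos dm hdm i).le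
        cases oj with
        | some j => exact f1 i j dm
        | none => exact f3 i dm
      · rw [if_neg hdm]
    · -- φm ≤ 1
      intro i oj dm
      dsimp only
      by_cases hdm : dm ∈ Tsk
      · rw [if_pos hdm, div_le_one (hTmpos dm hdm i)]
        exact hBm dm hdm i oj
      · rw [if_neg hdm]; norm_num
    · -- 0 ≤ φp
      intro i j dm
      dsimp only
      by_cases hdm : dm ∈ Tsk
      · rw [if_pos hdm]
        exact div_nonneg (f2 i j dm) (hTppos dm hdm i).le
      · rw [if_neg hdm]
    · -- φp ≤ 1
      intro i j dm
      dsimp only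
      by_cases hdm : dm ∈ Tsk
      · rw [if_pos hdm, div_le_one (hTppos dm hdm i)]
        exact hBp dm hdm i j
      · rw [if_neg hdm]; norm_num
    · -- φm supported on E
      intro i j dm hij
      dsimp only
      by_cases hdm : dm ∈ Tsk
      · rw [if_pos hdm]
        simp only [f4 i j dm hij, zero_div]
      · rw [if_neg hdm]
    · -- φp supported on E
      intro i j dm hij
      dsimp only
      by_cases hdm : dm ∈ Tsk
      · rw [if_pos hdm, f5 i j dm hij, zero_div]
      · rw [if_neg hdm]
    · -- sum to one (data)
      intro dm hdm i
      dsimp only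
      rw [if_pos hdm]
      have heq : ∀ j : V, (if dm ∈ Tsk then (xs s).1 i j dm
          / ((∑ k, (xs s).1 k i dm) + r i dm) else 0)
          = (xs s).1 i j dm / ((∑ k, (xs s).1 k i dm) + r i dm) :=
        fun j => if_pos hdm
      rw [Finset.sum_congr rfl (fun j _ => heq j), ← Finset.sum_div, ← add_div,
        div_eq_one_iff_eq (hTmpos dm hdm i).ne']
      linarith [hOutm dm hdm i]
    · -- sum to one (result)
      intro dm hdm i hid
      dsimp only
      have heq : ∀ j : V, (if dm ∈ Tsk then (xs s).2.1 i j dm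
          / ((∑ k, (xs s).2.1 k i dm) + (xs s).2.2 i dm) else 0)
          = (xs s).2.1 i j dm / ((∑ k, (xs s).2.1 k i dm) + (xs s).2.2 i dm) :=
        fun j => if_pos hdm
      rw [Finset.sum_congr rfl (fun j _ => heq j), ← Finset.sum_div,
        div_eq_one_iff_eq (hTppos dm hdm i).ne']
      exact hOutp dm hdm i hid
    · -- φp at destination
      intro dm hdm j
      dsimp only
      rw [if_pos hdm, f8 dm hdm j, zero_div]
    · -- Induces
      intro dm hdm i
      have hmne := (hTmpos dm hdm i).ne'
      have hpne := (hTppos dm hdm i).ne'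
      refine ⟨fun j => ?_, ?_, fun j => ?_⟩
      · dsimp only; rw [if_pos hdm, mul_comm, div_mul_cancel₀ _ hmne]
      · dsimp only; rw [if_pos hdm, mul_comm, div_mul_cancel₀ _ hmne]
      · dsimp only; rw [if_pos hdm, mul_comm, div_mul_cancel₀ _ hpne]
    · -- uniqueness
      intro φm' φp' hstrat' hind' dm hdm
      constructor
      · intro i oj
        have hmne := (hTmpos dm hdm i).ne'
        obtain ⟨hi1, hi2, hi3⟩ := hind' dm hdm i
        cases oj with
        | some j =>
          dsimp only
          rw [if_pos hdm, eq_div_iff hmne]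
          linarith [hi1 j]
        | none =>
          dsimp only
          rw [if_pos hdm, eq_div_iff hmne]
          linarith [hi2]
      · intro i j
        have hpne := (hTppos dm hdm i).ne'
        obtain ⟨hi1, hi2, hi3⟩ := hind' dm hdm i
        dsimp only
        rw [if_pos hdm, eq_div_iff hpne]
        linarith [hi3 j]
  · -- convexity along s
    refine ⟨convex_Icc 0 1, fun u _ v _ a b ha hb hab => ?_⟩
    have hx : xs (a • u + b • v) = a • xs u + b • xs v := by
      rw [hxs, hxs, hxs]
      have hb' : b = 1 - a := by linarith
      subst hb'
      refine Prod.ext ?_ (Prod.ext ?_ ?_)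
      · funext i j dm
        show _ = a * ((1 - u) * (tm₁ i dm * φm₁ i (some j) dm)
            + u * (tm₂ i dm * φm₂ i (some j) dm))
          + (1 - a) * ((1 - v) * (tm₁ i dm * φm₁ i (some j) dm)
            + v * (tm₂ i dm * φm₂ i (some j) dm))
        simp only [smul_eq_mul]
        ring
      · funext i j dm
        show _ = a * ((1 - u) * (tp₁ i dm * φp₁ i j dm) + u * (tp₂ i dm * φp₂ i j dm))
          + (1 - a) * ((1 - v) * (tp₁ i dm * φp₁ i j dm) + v * (tp₂ i dm * φp₂ i j dm))
        simp only [smul_eq_mul]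
        ring
      · funext i dm
        show _ = a * ((1 - u) * (tm₁ i dm * φm₁ i none dm)
            + u * (tm₂ i dm * φm₂ i none dm))
          + (1 - a) * ((1 - v) * (tm₁ i dm * φm₁ i none dm)
            + v * (tm₂ i dm * φm₂ i none dm))
        simp only [smul_eq_mul]
        ring
    show flowCost E Tsk Lm Lp w D C (xs (a • u + b • v)) ≤ _
    rw [hx]
    simpa [smul_eq_mul] using
      hcost.2 (Set.mem_univ (xs u)) (Set.mem_univ (xs v)) ha hb hab
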